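/- If P is a shortest path in a graph G containing at least four vertices, then no two distinct vertices of P are nd-equivalent; in particular P intersects each nd-equivalence class in at most one vertex. -/

import Mathlib

/-- Two vertices are nd-equivalent if they have the same neighborhoods,
except possibly for themselves. -/
def ndRel {V : Type*} (G : SimpleGraph V) (u v : V) : Prop :=
  G.neighborSet u \ {v} = G.neighborSet v \ {u}

private lemma exists_segment {V : Type*} {G : SimpleGraph V} :
    ∀ {u v : V} (p : G.Walk u v) (i j : ℕ), i ≤ j → j ≤ p.length →
      ∃ q : G.Walk (p.getVert i) (p.getVert j), q.length = j - i := by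
  intro u v p
  induction p with
  | nil =>
    intro i j hij hjl
    simp only [SimpleGraph.Walk.length_nil, Nat.le_zero] at hjl
    subst hjl
    obtain rfl : i = 0 := Nat.le_zero.mp hij
    exact ⟨SimpleGraph.Walk.nil.copy (SimpleGraph.Walk.getVert_zero _).symm
      (SimpleGraph.Walk.getVert_zero _).symm, by simp⟩
  | cons h q ih =>
    intro i j hij hjl
    match i, j with
    | 0, 0 =>
      exact ⟨SimpleGraph.Walk.nil.copy (SimpleGraph.Walk.getVert_zero _).symm
        (SimpleGraph.Walk.getVert_zero _).symm, by simp⟩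
    | 0, m + 1 =>
      obtain ⟨r, hr⟩ := ih 0 m (Nat.zero_le m) (by
        simpa using Nat.succ_le_succ_iff.mp (by simpa using hjl))
      exact ⟨SimpleGraph.Walk.cons h (r.copy (q.getVert_zero) rfl), 
        congrArg (· + 1) ((SimpleGraph.Walk.length_copy _ _ _).trans (hr.trans (Nat.sub_zero m)))⟩
    | k + 1, m + 1 =>
      obtain ⟨r, hr⟩ := ih k m (Nat.succ_le_succ_iff.mp hij) (by
        simpa using Nat.succ_le_succ_iff.mp (by simpa using hjl))
      exact ⟨r, hr.trans (by omega : m - k = m + 1 - (k + 1))⟩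

private lemma dist_getVert_eq {V : Type*} {G : SimpleGraph V} {u v : V}
    (p : G.Walk u v) (hshort : p.length = G.dist u v) {i j : ℕ}
    (hij : i ≤ j) (hjl : j ≤ p.length) :
    G.dist (p.getVert i) (p.getVert j) = j - i := by
  obtain ⟨q, hq⟩ := exists_segment p i j hij hjl
  have h1 : G.dist (p.getVert i) (p.getVert j) ≤ j - i := hq ▸ SimpleGraph.dist_le q
  obtain ⟨q1, hq1⟩ := exists_segment p 0 i (Nat.zero_le i) (le_trans hij hjl)
  obtain ⟨q2, hq2⟩ := exists_segment p j p.length hjl le_rfl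
  have hreach : G.Reachable (p.getVert i) (p.getVert j) := ⟨q⟩
  obtain ⟨r, hr⟩ := hreach.exists_walk_length_eq_dist
  have h2 := SimpleGraph.dist_le
    (((q1.copy (p.getVert_zero) rfl).append r).append (q2.copy rfl (p.getVert_length)))
  simp only [SimpleGraph.Walk.length_append, SimpleGraph.Walk.length_copy, hq1, hq2, hr,
    ← hshort] at h2
  omega

private lemma aux_nd {V : Type*} {G : SimpleGraph V} {u v : V}
    (p : G.Walk u v) (hshort : p.length = G.dist u v) (hlen : 3 ≤ p.length)
    {i j : ℕ} (hij : i < j) (hjl : j ≤ p.length)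
    (hnd : ndRel G (p.getVert i) (p.getVert j)) : False := by
  set a := p.getVert i with ha
  set b := p.getVert j with hb
  have hmem : ∀ c : V, (G.Adj a c ∧ c ≠ b) ↔ (G.Adj b c ∧ c ≠ a) := by
    intro c
    have := Set.ext_iff.mp hnd c
    simpa [SimpleGraph.mem_neighborSet, Set.mem_diff] using this
  have hne : ∀ {x y : V} {k l : ℕ}, k ≤ l → l ≤ p.length → x = p.getVert k →
      y = p.getVert l → 2 ≤ l - k → x ≠ y := by
    intro x y k l hkl hll hx hy h2 hxy
    have := dist_getVert_eq p hshort hkl hll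
    rw [← hx, ← hy, hxy, SimpleGraph.dist_self] at this
    omega
  have hd1 : ∀ {x y : V}, G.Adj x y → G.dist x y = 1 :=
    fun h => SimpleGraph.dist_eq_one_iff_adj.mpr h
  rcases Nat.lt_or_ge i 1 with hi0 | hi1
  · -- i = 0
    obtain rfl : i = 0 := by omega
    rcases Nat.lt_or_ge j 3 with hj2 | hj3
    · -- j ≤ 2, use c = getVert (j+1); note j+1 ≤ length
      have hjl1 : j + 1 ≤ p.length := by omega
      set c := p.getVert (j + 1) with hc
      have hadj : G.Adj b c := SimpleGraph.Walk.adj_getVert_succ p (by omega)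
      have hca : c ≠ a := (hne (Nat.zero_le _) hjl1 ha hc (by omega)).symm
      have hac : G.Adj a c := ((hmem c).mpr ⟨hadj, hca⟩).1
      have := dist_getVert_eq p hshort (Nat.zero_le (j+1)) hjl1
      rw [← ha, ← hc, hd1 hac] at this
      omega
    · -- j ≥ 3, use c = getVert 1
      set c := p.getVert 1 with hc
      have hadj : G.Adj a c := SimpleGraph.Walk.adj_getVert_succ p (by omega)
      have hcb : c ≠ b := hne (by omega) hjl hc hb (by omega)
      have hbc : G.Adj b c := ((hmem c).mp ⟨hadj, hcb⟩).1
      have := dist_getVert_eq p hshort (show 1 ≤ j by omega) hjl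
      rw [← hc, ← hb, SimpleGraph.dist_comm, hd1 hbc] at this
      omega
  · -- i ≥ 1, use c = getVert (i-1)
    set c := p.getVert (i - 1) with hc
    have hadj : G.Adj c a := by
      have := SimpleGraph.Walk.adj_getVert_succ p
        (show i - 1 < p.length by omega)
      rwa [show i - 1 + 1 = i by omega, ← ha, ← hc] at this
    have hcb : c ≠ b := hne (by omega) hjl hc hb (by omega)
    have hbc : G.Adj b c := ((hmem c).mp ⟨hadj.symm, hcb⟩).1
    have := dist_getVert_eq p hshort (show i - 1 ≤ j by omega) hjl
    rw [← hc, ← hb, SimpleGraph.dist_comm, hd1 hbc] at this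
    omega

/-- If `P` is a shortest path containing at least four vertices, then no two
distinct vertices of `P` are nd-equivalent (so `P` meets each nd-class at most
once). -/
theorem shortest_path_four_vertices_nd_distinct {V : Type*} (G : SimpleGraph V)
    {u v : V} (p : G.Walk u v) (hp : p.IsPath) (hshort : p.length = G.dist u v)
    (h4 : 4 ≤ p.support.length) :
    ∀ a b, a ∈ p.support → b ∈ p.support → a ≠ b → ¬ ndRel G a b := by
  intro a b ha hb hab hnd
  have hlen : 3 ≤ p.length := by
    have := p.length_support
    omega
  obtain ⟨i, hia, hil⟩ := SimpleGraph.Walk.mem_support_iff_exists_getVert.mp ha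
  obtain ⟨j, hjb, hjl⟩ := SimpleGraph.Walk.mem_support_iff_exists_getVert.mp hb
  subst hia hjb
  rcases lt_trichotomy i j with h | h | h
  · exact aux_nd p hshort hlen h hjl hnd
  · exact hab (by rw [h])
  · refine aux_nd p hshort hlen h hil ?_
    unfold ndRel at hnd ⊢
    exact hnd.symm
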